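/- (Pretty good quantum strategy, intermediate regime.) Fix γ with 1/2 < γ < 1/√2 and let φ = |Ψ⁺⟩⟨Ψ⁺| on ℂ²⊗ℂ². Let Q₀ = R₀ = |Ψ⁺⟩⟨Ψ⁺| + (γ−1/2)(|00⟩⟨00|+|11⟩⟨11|) and Q₁ = R₁ = |Ψ⁻⟩⟨Ψ⁻| + (γ−1/2)(|00⟩⟨00|+|11⟩⟨11|), and define the effective two-qubit operators M_{a,b}[(i,k),(j,l)] = Σ_{i',k',i'',k''} Q_a[(i,i'),(j,i'')]·R_b[(k,k'),(l,k'')]·φ[(i'',k''),(i',k')]. Then with Π₀ = M_{0,0}+M_{1,1}, Π₁ = M_{0,1}+M_{1,0}, Π_∅ = I₄−Π₀−Π₁, the triple (Π₀,Π₁,Π_∅) is γ-admissible and V = (1/2)·Tr[ρ₀Π₀ + ρ₁Π₁] = γ²/2 + 1/(8√2), i.e., the postselected Bell value equals 1/(√2·γ²). -/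

import Mathlib

open Matrix Complex Kronecker BigOperators ComplexOrder

noncomputable section

abbrev Mat2 := Matrix (Fin 2) (Fin 2) ℂ
abbrev Mat4 := Matrix (Fin 2 × Fin 2) (Fin 2 × Fin 2) ℂ

/-- Pauli X matrix -/
def PX : Mat2 := !![0, 1; 1, 0]

/-- Pauli Y matrix -/
def PY : Mat2 := !![0, -Complex.I; Complex.I, 0]

/-- sign (−1)^b for a bit b -/
def bsign (b : Bool) : ℂ := if b then -1 else 1

/-- boolean function f(x̄,ȳ) = (x₁·y₁) XOR x₂ XOR y₂ -/
def fxy (x y : Bool × Bool) : Bool := (((x.1 && y.1)).xor x.2).xor y.2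

/-- qubit input states ω_{x̄}: ω_{(0,x₂)} = (I+(−1)^{x₂}X)/2, ω_{(1,x₂)} = (I+(−1)^{x₂}Y)/2 -/
def omg (x : Bool × Bool) : Mat2 :=
  (1/2 : ℂ) • ((1 : Mat2) + bsign x.2 • (if x.1 then PY else PX))

/-- qubit input states τ_{ȳ} = (I+(−1)^{y₂}(X+(−1)^{y₁}Y)/√2)/2 -/
def tau (y : Bool × Bool) : Mat2 :=
  (1/2 : ℂ) • ((1 : Mat2) + (bsign y.2 / (Real.sqrt 2 : ℂ)) • (PX + bsign y.1 • PY))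

/-- averaged input states ρ₀ (for c = false) and ρ₁ (for c = true) -/
def rho (c : Bool) : Mat4 :=
  (1/8 : ℂ) • ∑ x : Bool × Bool, ∑ y : Bool × Bool,
    (if fxy x y = c then omg x ⊗ₖ tau y else 0)

/-- standard basis vectors of ℂ⁴ ≅ ℂ² ⊗ ℂ² -/
def ket (i j : Fin 2) : (Fin 2 × Fin 2) → ℂ := fun p => if p = (i, j) then 1 else 0

def PhiP : (Fin 2 × Fin 2) → ℂ := fun p => (1 / (Real.sqrt 2 : ℂ)) * (ket 0 0 p + ket 1 1 p)
def PhiM : (Fin 2 × Fin 2) → ℂ := fun p => (1 / (Real.sqrt 2 : ℂ)) * (ket 0 0 p - ket 1 1 p)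
def PsiP : (Fin 2 × Fin 2) → ℂ := fun p => (1 / (Real.sqrt 2 : ℂ)) * (ket 0 1 p + ket 1 0 p)
def PsiM : (Fin 2 × Fin 2) → ℂ := fun p => (1 / (Real.sqrt 2 : ℂ)) * (ket 0 1 p - ket 1 0 p)

/-- rank one projector |v⟩⟨v| -/
def proj (v : (Fin 2 × Fin 2) → ℂ) : Mat4 := Matrix.vecMulVec v (star v)

/-- a γ-admissible measurement triple -/
def Admissible (γ : ℝ) (P0 P1 Pe : Mat4) : Prop :=
  P0.PosSemidef ∧ P1.PosSemidef ∧ Pe.PosSemidef ∧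
  P0 + P1 + Pe = 1 ∧
  ∀ x y : Bool × Bool, ((omg x ⊗ₖ tau y) * Pe).trace = 1 - (γ : ℂ)^2

/-- guessing value V = (1/2)·Tr[ρ₀Π₀ + ρ₁Π₁] (a real number) -/
def Gval (P0 P1 : Mat4) : ℝ := (1/2) * ((rho false * P0 + rho true * P1).trace).re

/-- effective two-qubit operator: partial trace over the target systems of
    (Q_a ⊗ R_b)(I_A ⊗ φ_{A'B'} ⊗ I_B) -/
def effM (Q R phi : Mat4) : Mat4 := Matrix.of fun p q =>
  ∑ i' : Fin 2, ∑ k' : Fin 2, ∑ i'' : Fin 2, ∑ k'' : Fin 2,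
    Q (p.1, i') (q.1, i'') * R (p.2, k') (q.2, k'') * phi (i'', k'') (i', k')

/-- Bell-state-measurement POVM elements of the intermediate regime -/
def Qmid (γ : ℝ) : Bool → Mat4 := fun a =>
  (if a then proj PsiM else proj PsiP)
    + (γ - 1/2 : ℝ) • (proj (ket 0 0) + proj (ket 1 1))

-- AUX SECTION (to be inserted before theorem)
section Aux

lemma psd_add {A B : Mat4} (hA : A.PosSemidef) (hB : B.PosSemidef) : (A + B).PosSemidef := by
  refine Matrix.PosSemidef.of_dotProduct_mulVec_nonneg (hA.1.add hB.1) fun x => ?_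
  rw [Matrix.add_mulVec, dotProduct_add]
  exact add_nonneg (hA.dotProduct_mulVec_nonneg x) (hB.dotProduct_mulVec_nonneg x)

lemma proj_psd (v : (Fin 2 × Fin 2) → ℂ) : (proj v).PosSemidef := by
  refine Matrix.PosSemidef.of_dotProduct_mulVec_nonneg ?_ ?_
  · ext p q
    simp [proj, vecMulVec_apply, Matrix.conjTranspose_apply, mul_comm]
  · intro x
    have h : dotProduct (star x) ((proj v) *ᵥ x)
        = star (dotProduct (star v) x) * (dotProduct (star v) x) := by
      simp only [proj, dotProduct, mulVec, vecMulVec_apply, dotProduct]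
      simp only [star_sum, StarMul.star_mul, star_star, Finset.mul_sum, Finset.sum_mul]
      rw [Finset.sum_comm]
      apply Finset.sum_congr rfl; intro p _
      apply Finset.sum_congr rfl; intro q _
      simp only [Pi.star_apply, star_star]
      ring
    rw [h]
    exact star_mul_self_nonneg _

lemma psd_smul {c : ℝ} (hc : 0 ≤ c) {M : Mat4} (h : M.PosSemidef) : ((c:ℂ) • M).PosSemidef := by
  refine Matrix.PosSemidef.of_dotProduct_mulVec_nonneg ?_ ?_
  · ext p q
    simp only [Matrix.conjTranspose_apply, Matrix.smul_apply, star_smul, Complex.star_def,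
      Complex.conj_ofReal, smul_eq_mul]
    rw [← h.1.apply p q]
    simp [Matrix.conjTranspose_apply]
  · intro x
    rw [smul_mulVec, dotProduct_smul]
    exact smul_nonneg (by exact_mod_cast Complex.zero_le_real.2 hc) (h.dotProduct_mulVec_nonneg x)

def av : (Fin 2 × Fin 2) → ℂ := fun p => ket 0 1 p + ket 1 0 p
def bv : (Fin 2 × Fin 2) → ℂ := fun p => ket 0 1 p - ket 1 0 p

lemma h2c : (1 / (Real.sqrt 2 : ℂ)) * (1 / (Real.sqrt 2 : ℂ)) = 1/2 := by
  rw [div_mul_div_comm, one_mul]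
  norm_cast
  rw [Real.mul_self_sqrt (by norm_num)]
  norm_num

lemma sqrt2_mul_self : (Real.sqrt 2 : ℂ) * (Real.sqrt 2 : ℂ) = 2 := by
  norm_cast
  rw [Real.mul_self_sqrt (by norm_num)]

lemma sqrt2_ne_zero : (Real.sqrt 2 : ℂ) ≠ 0 := by
  intro h
  have := sqrt2_mul_self
  rw [h] at this
  norm_num at this

lemma div_sqrt2 (z : ℂ) : z / (Real.sqrt 2 : ℂ) = z * (Real.sqrt 2 : ℂ) / 2 := by
  have h := sqrt2_mul_self
  field_simp
  linear_combination (-z) * h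

lemma star_sqrt2 : star (1 / (Real.sqrt 2 : ℂ)) = 1 / (Real.sqrt 2 : ℂ) := by
  simp [Complex.star_def, map_div₀, Complex.conj_ofReal]

lemma hPsiP (p q : Fin 2 × Fin 2) : proj PsiP p q = (1/2) * (av p * av q) := by
  simp only [proj, vecMulVec_apply, PsiP, av, Pi.star_apply, star_mul', star_sqrt2,
    star_add, ket, apply_ite (star : ℂ → ℂ), star_one, star_zero]
  rw [show ∀ a b : ℂ, (1/(Real.sqrt 2:ℂ)) * a * ((1/(Real.sqrt 2:ℂ)) * b)
      = ((1/(Real.sqrt 2:ℂ)) * (1/(Real.sqrt 2:ℂ))) * (a*b) from fun a b => by ring, h2c]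

lemma hPsiM (p q : Fin 2 × Fin 2) : proj PsiM p q = (1/2) * (bv p * bv q) := by
  simp only [proj, vecMulVec_apply, PsiM, bv, Pi.star_apply, star_mul', star_sqrt2,
    star_sub, ket, apply_ite (star : ℂ → ℂ), star_one, star_zero]
  rw [show ∀ a b : ℂ, (1/(Real.sqrt 2:ℂ)) * a * ((1/(Real.sqrt 2:ℂ)) * b)
      = ((1/(Real.sqrt 2:ℂ)) * (1/(Real.sqrt 2:ℂ))) * (a*b) from fun a b => by ring, h2c]

lemma hket (i j : Fin 2) (p q : Fin 2 × Fin 2) :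
    proj (ket i j) p q = (ket i j p) * (ket i j q) := by
  simp only [proj, vecMulVec_apply, ket, Pi.star_apply, apply_ite (star : ℂ → ℂ),
    star_one, star_zero]

lemma hQ (γ : ℝ) (a : Bool) (p q : Fin 2 × Fin 2) :
    Qmid γ a p q = (if a then (1/2)*(bv p*bv q) else (1/2)*(av p*av q))
      + ((γ:ℂ) - 1/2) * (ket 0 0 p * ket 0 0 q + ket 1 1 p * ket 1 1 q) := by
  rcases a
  · simp only [Qmid, Matrix.add_apply, Matrix.smul_apply, if_true, if_false,
      Complex.real_smul, Complex.ofReal_sub, Bool.false_eq_true]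
    rw [hPsiP, hket, hket]
    push_cast; ring
  · simp only [Qmid, Matrix.add_apply, Matrix.smul_apply, if_true, if_false,
      Complex.real_smul, Complex.ofReal_sub]
    rw [hPsiM, hket, hket]
    push_cast; ring


set_option maxHeartbeats 1000000 in
lemma hP0 (γ : ℝ) : effM (Qmid γ false) (Qmid γ false) (proj PsiP)
      + effM (Qmid γ true) (Qmid γ true) (proj PsiP)
    = (((γ - 1/2 : ℝ)):ℂ) • (proj (ket 0 0) + proj (ket 1 1))
      + (((γ^2 - γ + 3/4 : ℝ)):ℂ) • proj PsiP
      + ((((γ - 1/2)^2 : ℝ)):ℂ) • proj PsiM := by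
  ext ⟨i, k⟩ ⟨j, l⟩
  fin_cases i <;> fin_cases k <;> fin_cases j <;> fin_cases l <;>
  · simp only [effM, Matrix.of_apply, Matrix.add_apply, Matrix.smul_apply, hQ, hPsiP, hPsiM,
      hket, Fin.sum_univ_two, smul_eq_mul, ket, av, bv, Prod.mk.injEq]
    norm_num [Prod.ext_iff]
    try (push_cast; ring)
set_option maxHeartbeats 1000000 in
lemma hP1 (γ : ℝ) : effM (Qmid γ false) (Qmid γ true) (proj PsiP)
      + effM (Qmid γ true) (Qmid γ false) (proj PsiP)
    = (((γ - 1/2 : ℝ)):ℂ) • (proj (ket 0 0) + proj (ket 1 1))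
      + ((((γ - 1/2)^2 : ℝ)):ℂ) • proj PsiP
      + (((γ^2 - γ + 3/4 : ℝ)):ℂ) • proj PsiM := by
  ext ⟨i, k⟩ ⟨j, l⟩
  fin_cases i <;> fin_cases k <;> fin_cases j <;> fin_cases l <;>
  · simp only [effM, Matrix.of_apply, Matrix.add_apply, Matrix.smul_apply, hQ, hPsiP, hPsiM,
      hket, Fin.sum_univ_two, smul_eq_mul, ket, av, bv, Prod.mk.injEq]
    norm_num [Prod.ext_iff]
    try (push_cast; ring)

set_option maxHeartbeats 1000000 in
lemma hPe (γ : ℝ) : (1 : Mat4)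
      - (effM (Qmid γ false) (Qmid γ false) (proj PsiP)
          + effM (Qmid γ true) (Qmid γ true) (proj PsiP))
      - (effM (Qmid γ false) (Qmid γ true) (proj PsiP)
          + effM (Qmid γ true) (Qmid γ false) (proj PsiP))
    = (((2 - 2*γ : ℝ)):ℂ) • (proj (ket 0 0) + proj (ket 1 1))
      + (((2*γ - 2*γ^2 : ℝ)):ℂ) • (proj (ket 0 1) + proj (ket 1 0)) := by
  rw [sub_sub, hP0, hP1]
  ext ⟨i, k⟩ ⟨j, l⟩
  fin_cases i <;> fin_cases k <;> fin_cases j <;> fin_cases l <;>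
  · simp only [Matrix.sub_apply, Matrix.one_apply, Matrix.add_apply, Matrix.smul_apply,
      hPsiP, hPsiM, hket, smul_eq_mul, ket, av, bv, Prod.mk.injEq]
    norm_num [Prod.ext_iff]
    try (push_cast; ring)
lemma omg_diag (x : Bool × Bool) (i : Fin 2) : omg x i i = 1/2 := by
  rcases x with ⟨x1, x2⟩
  rcases x1 <;> rcases x2 <;> fin_cases i <;>
    simp [omg, PX, PY, bsign] <;> norm_num

lemma tau_diag (y : Bool × Bool) (j : Fin 2) : tau y j j = 1/2 := by
  rcases y with ⟨y1, y2⟩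
  rcases y1 <;> rcases y2 <;> fin_cases j <;>
    simp [tau, PX, PY, bsign] <;> norm_num

lemma trace_mul_projket (A : Mat4) (i j : Fin 2) :
    (A * proj (ket i j)).trace = A (i, j) (i, j) := by
  fin_cases i <;> fin_cases j <;>
  · simp only [Matrix.trace, Matrix.diag, Matrix.mul_apply, hket, ket,
      Fintype.sum_prod_type, Fin.sum_univ_two, Prod.mk.injEq]
    norm_num

lemma trace_mul_psip (A : Mat4) : (A * proj PsiP).trace
    = (1/2) * (A (0,1) (0,1) + A (0,1) (1,0) + A (1,0) (0,1) + A (1,0) (1,0)) := by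
  simp only [Matrix.trace, Matrix.diag, Matrix.mul_apply, hPsiP, av, ket,
    Fintype.sum_prod_type, Fin.sum_univ_two, Prod.mk.injEq]
  norm_num
  ring

lemma trace_mul_psim (A : Mat4) : (A * proj PsiM).trace
    = (1/2) * (A (0,1) (0,1) - A (0,1) (1,0) - A (1,0) (0,1) + A (1,0) (1,0)) := by
  simp only [Matrix.trace, Matrix.diag, Matrix.mul_apply, hPsiM, bv, ket,
    Fintype.sum_prod_type, Fin.sum_univ_two, Prod.mk.injEq]
  norm_num
  ring
lemma inv_sqrt2 : ((Real.sqrt 2 : ℝ) : ℂ)⁻¹ = (Real.sqrt 2 : ℂ)/2 := by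
  have h := sqrt2_mul_self
  field_simp
  linear_combination -h
set_option maxHeartbeats 2000000 in
lemma hKey (γ : ℝ) (x y : Bool × Bool) :
    ((omg x ⊗ₖ tau y) * (if fxy x y then
        effM (Qmid γ false) (Qmid γ true) (proj PsiP)
          + effM (Qmid γ true) (Qmid γ false) (proj PsiP)
      else
        effM (Qmid γ false) (Qmid γ false) (proj PsiP)
          + effM (Qmid γ true) (Qmid γ true) (proj PsiP))).trace
    = (γ:ℂ)^2/2 + (Real.sqrt 2:ℂ)/16 := by
  rcases x with ⟨x1, x2⟩; rcases y with ⟨y1, y2⟩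
  rcases x1 <;> rcases x2 <;> rcases y1 <;> rcases y2 <;>
  · simp only [fxy, Bool.xor, Bool.and_self, Bool.and_false, Bool.false_and, Bool.and_true,
      Bool.true_and, Bool.false_bne, Bool.true_bne, Bool.not_false,
      Bool.not_true, Bool.bne_false, Bool.bne_true, if_true, if_false, Bool.false_eq_true,
      ite_true, ite_false, hP0, hP1]
    simp only [Matrix.mul_add, Matrix.mul_smul, Matrix.trace_add, Matrix.trace_smul,
      trace_mul_projket, trace_mul_psip, trace_mul_psim, Matrix.kroneckerMap_apply,
      smul_eq_mul]
    simp [omg, tau, PX, PY, bsign, div_sqrt2]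
    push_cast
    ring_nf
    try simp only [Complex.I_sq, inv_sqrt2]
    try ring

/-- pretty good quantum strategy, intermediate regime. -/
theorem pretty_good_strategy_intermediate (γ : ℝ) (hγ : 1/2 < γ) (hγ' : γ < 1/Real.sqrt 2) :
    Admissible γ
      (effM (Qmid γ false) (Qmid γ false) (proj PsiP)
        + effM (Qmid γ true) (Qmid γ true) (proj PsiP))
      (effM (Qmid γ false) (Qmid γ true) (proj PsiP)
        + effM (Qmid γ true) (Qmid γ false) (proj PsiP))
      (1 - (effM (Qmid γ false) (Qmid γ false) (proj PsiP)
             + effM (Qmid γ true) (Qmid γ true) (proj PsiP))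
         - (effM (Qmid γ false) (Qmid γ true) (proj PsiP)
             + effM (Qmid γ true) (Qmid γ false) (proj PsiP))) ∧
    Gval (effM (Qmid γ false) (Qmid γ false) (proj PsiP)
            + effM (Qmid γ true) (Qmid γ true) (proj PsiP))
         (effM (Qmid γ false) (Qmid γ true) (proj PsiP)
            + effM (Qmid γ true) (Qmid γ false) (proj PsiP))
      = γ^2/2 + 1/(8*Real.sqrt 2) ∧
    8 * (Gval (effM (Qmid γ false) (Qmid γ false) (proj PsiP)
                 + effM (Qmid γ true) (Qmid γ true) (proj PsiP))
              (effM (Qmid γ false) (Qmid γ true) (proj PsiP)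
                 + effM (Qmid γ true) (Qmid γ false) (proj PsiP)) / γ^2 - 1/2)
      = 1/(Real.sqrt 2 * γ^2) := by
  have hss : Real.sqrt 2 * Real.sqrt 2 = 2 := Real.mul_self_sqrt (by norm_num)
  have hspos : (0:ℝ) < Real.sqrt 2 := Real.sqrt_pos.mpr (by norm_num)
  have hsne : Real.sqrt 2 ≠ 0 := ne_of_gt hspos
  have hs1 : (1:ℝ) < Real.sqrt 2 := by nlinarith
  have hγ1 : γ < 1 := by
    have : 1/Real.sqrt 2 < 1 := by
      rw [div_lt_one hspos]; exact hs1
    linarith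
  have hγ0 : 0 < γ := by linarith
  -- Gval computation
  have htr : (rho false * (effM (Qmid γ false) (Qmid γ false) (proj PsiP)
          + effM (Qmid γ true) (Qmid γ true) (proj PsiP))
      + rho true * (effM (Qmid γ false) (Qmid γ true) (proj PsiP)
          + effM (Qmid γ true) (Qmid γ false) (proj PsiP))).trace
      = (γ:ℂ)^2 + (Real.sqrt 2:ℂ)/8 := by
    have expand : ∀ (c : Bool) (P : Mat4), (rho c * P).trace
        = (1/8:ℂ) * ∑ x : Bool × Bool, ∑ y : Bool × Bool,
            (if fxy x y = c then ((omg x ⊗ₖ tau y) * P).trace else 0) := by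
      intro c P
      rw [rho, smul_mul_assoc, Matrix.trace_smul]
      rw [Finset.sum_mul]
      rw [Matrix.trace_sum]
      simp only [Finset.sum_mul, Matrix.trace_sum, ite_mul, Matrix.zero_mul,
        apply_ite Matrix.trace, Matrix.trace_zero, smul_eq_mul]
    rw [Matrix.trace_add, expand, expand]
    rw [← mul_add, ← Finset.sum_add_distrib]
    have hsum : ∀ x : Bool × Bool, (∑ y : Bool × Bool,
          (if fxy x y = false then ((omg x ⊗ₖ tau y) * (effM (Qmid γ false) (Qmid γ false) (proj PsiP)
            + effM (Qmid γ true) (Qmid γ true) (proj PsiP))).trace else 0))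
        + (∑ y : Bool × Bool,
          (if fxy x y = true then ((omg x ⊗ₖ tau y) * (effM (Qmid γ false) (Qmid γ true) (proj PsiP)
            + effM (Qmid γ true) (Qmid γ false) (proj PsiP))).trace else 0))
        = ∑ y : Bool × Bool, ((γ:ℂ)^2/2 + (Real.sqrt 2:ℂ)/16) := by
      intro x
      rw [← Finset.sum_add_distrib]
      apply Finset.sum_congr rfl
      intro y _
      have h := hKey γ x y
      rcases hf : fxy x y
      · rw [hf] at h; simp only [if_false, if_true, Bool.false_eq_true] at h ⊢
        simpa using h
      · rw [hf] at h; simp only [if_false, if_true, Bool.true_eq_false] at h ⊢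
        simpa using h
    rw [Finset.sum_congr rfl (fun x _ => hsum x)]
    simp only [Finset.sum_const, Finset.card_univ, Fintype.card_prod, Fintype.card_bool,
      nsmul_eq_mul]
    push_cast
    ring
  have hG : Gval (effM (Qmid γ false) (Qmid γ false) (proj PsiP)
        + effM (Qmid γ true) (Qmid γ true) (proj PsiP))
      (effM (Qmid γ false) (Qmid γ true) (proj PsiP)
        + effM (Qmid γ true) (Qmid γ false) (proj PsiP))
      = γ^2/2 + 1/(8*Real.sqrt 2) := by
    rw [Gval, htr]
    rw [show ((γ:ℂ)^2 + (Real.sqrt 2:ℂ)/8) = ((γ^2 + Real.sqrt 2/8 : ℝ) : ℂ) by push_cast; ring]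
    rw [Complex.ofReal_re]
    field_simp
    linear_combination hss
  refine ⟨⟨?_, ?_, ?_, ?_, ?_⟩, hG, ?_⟩
  · rw [hP0 γ]
    exact psd_add (psd_add (psd_smul (by linarith) (psd_add (proj_psd _) (proj_psd _)))
      (psd_smul (by nlinarith) (proj_psd _))) (psd_smul (sq_nonneg _) (proj_psd _))
  · rw [hP1 γ]
    exact psd_add (psd_add (psd_smul (by linarith) (psd_add (proj_psd _) (proj_psd _)))
      (psd_smul (sq_nonneg _) (proj_psd _))) (psd_smul (by nlinarith) (proj_psd _))
  · rw [hPe γ]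
    exact psd_add (psd_smul (by linarith) (psd_add (proj_psd _) (proj_psd _)))
      (psd_smul (by nlinarith) (psd_add (proj_psd _) (proj_psd _)))
  · abel
  · intro x y
    rw [hPe γ]
    simp only [Matrix.mul_add, Matrix.mul_smul, Matrix.trace_add, Matrix.trace_smul,
      trace_mul_projket, smul_eq_mul, Matrix.kroneckerMap_apply, omg_diag, tau_diag]
    push_cast
    ring
  · rw [hG]
    field_simp
    ring
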